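/- Suppose the matrix powers P_π^k and P_μ^k converge to the zero matrix as k → ∞, let s₀ ∈ S, let d_0 ∈ ℝ^S be the indicator vector of s₀, and suppose s₀ cannot be returned to: P_π(s₀|s) = 0 and P_μ(s₀|s) = 0 for all s ∈ S. Define the visitation vectors d_π = Σ_{i=0}^∞ (P_π^T)^i d_0 and d_μ = Σ_{i=0}^∞ (P_μ^T)^i d_0, and assume d_μ(s) > 0 for all s ∈ S. Then the ratio vector d_π/d_μ, with entries d_π(s)/d_μ(s), is the unique fixed point of the episodic COP operator Y c = D_{d_μ}^{-1} P_π^T D_{d_μ} c + d_0; that is, Y(d_π/d_μ) = d_π/d_μ, and any c ∈ ℝ^S with Y c = c equals d_π/d_μ. -/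

import Mathlib

open Matrix Finset Filter Topology

private lemma recur_aux {S : Type*} [Fintype S] [DecidableEq S]
    (A : Matrix S S ℝ) (d0 d : S → ℝ)
    (h : HasSum (fun i : ℕ => (A ^ i) *ᵥ d0) d) : d = A *ᵥ d + d0 := by
  have h1 : HasSum (fun i : ℕ => (A ^ (i + 1)) *ᵥ d0) (d - d0) := by
    have := (hasSum_nat_add_iff' (f := fun i : ℕ => (A ^ i) *ᵥ d0) (g := d) 1).mpr h
    simpa using this
  have h2 : HasSum (fun i : ℕ => A *ᵥ ((A ^ i) *ᵥ d0)) (A *ᵥ d) :=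
    (LinearMap.toContinuousLinearMap (Matrix.mulVecLin A)).hasSum h
  have hfun : (fun i : ℕ => A *ᵥ ((A ^ i) *ᵥ d0)) = fun i => (A ^ (i + 1)) *ᵥ d0 := by
    funext i; rw [Matrix.mulVec_mulVec, ← pow_succ']
  rw [hfun] at h2
  have := h1.unique h2
  rw [sub_eq_iff_eq_add] at this
  exact this

theorem episodic_cop_fixed_point
    {S : Type*} [Fintype S] [Nonempty S] [DecidableEq S]
    -- `Pπ`, `Pμ` are row-substochastic matrices (entry `P s s'` is `P(s' | s)`)
    (Pπ Pμ : Matrix S S ℝ)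
    (hPπ0 : ∀ s s', 0 ≤ Pπ s s') (hPπ1 : ∀ s, ∑ s', Pπ s s' ≤ 1)
    (hPμ0 : ∀ s s', 0 ≤ Pμ s s') (hPμ1 : ∀ s, ∑ s', Pμ s s' ≤ 1)
    -- episodic condition: the powers of `Pπ` and `Pμ` converge to the zero matrix
    (hPπpow : Tendsto (fun k => Pπ ^ k) atTop (𝓝 0))
    (hPμpow : Tendsto (fun k => Pμ ^ k) atTop (𝓝 0))
    -- single starting state `s₀`, with indicator starting distribution `d₀`
    (s0 : S) (d0 : S → ℝ) (hd0 : d0 = fun s => if s = s0 then 1 else 0)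
    -- `s₀` cannot be returned to
    (hnoretπ : ∀ s, Pπ s s0 = 0) (hnoretμ : ∀ s, Pμ s s0 = 0)
    -- visitation vectors `dπ = ∑ᵢ (Pπᵀ)ⁱ d₀` and `dμ = ∑ᵢ (Pμᵀ)ⁱ d₀`
    (dπ dμ : S → ℝ)
    (hdπ : HasSum (fun i : ℕ => (Pπᵀ ^ i) *ᵥ d0) dπ)
    (hdμ : HasSum (fun i : ℕ => (Pμᵀ ^ i) *ᵥ d0) dμ)
    (hdμpos : ∀ s, 0 < dμ s)
    -- the episodic COP operator `Y c = D_{dμ}⁻¹ Pπᵀ D_{dμ} c + d₀`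
    (Y : (S → ℝ) → (S → ℝ))
    (hY : ∀ c, Y c =
      (Matrix.diagonal (fun s => (dμ s)⁻¹) * Pπᵀ * Matrix.diagonal dμ) *ᵥ c + d0) :
    -- `dπ/dμ` is a fixed point of `Y`, and it is the unique one
    Y (fun s => dπ s / dμ s) = (fun s => dπ s / dμ s) ∧
    ∀ c : S → ℝ, Y c = c → c = fun s => dπ s / dμ s := by
  have hdμne : ∀ s, dμ s ≠ 0 := fun s => (hdμpos s).ne'
  -- dμ s0 = 1
  have hd0single : d0 = Pi.single s0 1 := by
    rw [hd0]; ext s; by_cases h : s = s0 <;> simp [Pi.single_apply, h]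
  have hμcol : ∀ i : ℕ, 0 < i → ∀ s', (Pμ ^ i) s' s0 = 0 := by
    intro i hi s'
    obtain ⟨j, rfl⟩ := Nat.exists_eq_add_of_lt hi
    rw [zero_add, pow_succ, Matrix.mul_apply]
    exact Finset.sum_eq_zero fun t _ => by rw [hnoretμ t, mul_zero]
  have hdμs0 : dμ s0 = 1 := by
    have hco : HasSum (fun i : ℕ => ((Pμᵀ ^ i) *ᵥ d0) s0) (dμ s0) :=
      Pi.hasSum.mp hdμ s0
    have hfun : (fun i : ℕ => ((Pμᵀ ^ i) *ᵥ d0) s0)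
        = fun i : ℕ => if i = 0 then (1 : ℝ) else 0 := by
      funext i
      have he : ((Pμᵀ ^ i) *ᵥ d0) s0 = (Pμ ^ i) s0 s0 := by
        rw [hd0single, Matrix.mulVec_single, ← Matrix.transpose_pow]
        simp [Matrix.transpose_apply]
        rw [← Matrix.transpose_pow, Matrix.transpose_apply]
      rw [he]
      rcases Nat.eq_zero_or_pos i with h | h
      · simp [h]
      · rw [hμcol i h s0, if_neg (Nat.pos_iff_ne_zero.mp h)]
    rw [hfun] at hco
    exact hco.unique (hasSum_ite_eq 0 1)
  -- recursion for dπ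
  have hdπrec : dπ = Pπᵀ *ᵥ dπ + d0 := recur_aux Pπᵀ d0 dπ hdπ
  -- (dμ s)⁻¹ * d0 s = d0 s
  have hd0inv : ∀ s, (dμ s)⁻¹ * d0 s = d0 s := by
    intro s
    rw [hd0]
    by_cases h : s = s0
    · simp [h, hdμs0]
    · simp [h]
  -- key: Y c at point s
  have hYpt : ∀ c s, Y c s = (dμ s)⁻¹ * (Pπᵀ *ᵥ fun t => dμ t * c t) s + d0 s := by
    intro c s
    have hDc : (Matrix.diagonal dμ) *ᵥ c = fun t => dμ t * c t := by
      funext t; rw [Matrix.mulVec_diagonal]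
    rw [hY c]
    show ((Matrix.diagonal (fun s => (dμ s)⁻¹) * Pπᵀ * Matrix.diagonal dμ) *ᵥ c) s
        + d0 s = _
    rw [← Matrix.mulVec_mulVec, ← Matrix.mulVec_mulVec, hDc, Matrix.mulVec_diagonal]
  -- entrywise convergence of powers of Pπ
  have hent : ∀ s t : S, Tendsto (fun k => (Pπ ^ k) s t) atTop (𝓝 0) := by
    intro s t
    have h1 : Tendsto (fun k => (Pπ ^ k) s) atTop (𝓝 ((0 : Matrix S S ℝ) s)) :=
      tendsto_pi_nhds.mp hPπpow s
    have h2 := tendsto_pi_nhds.mp h1 t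
    simpa using h2
  have hzero : ∀ w : S → ℝ, w = Pπᵀ *ᵥ w → w = 0 := by
    intro w hw
    have hk : ∀ k : ℕ, w = (Pπᵀ ^ k) *ᵥ w := by
      intro k
      induction k with
      | zero => simp
      | succ n ih =>
        calc w = (Pπᵀ ^ n) *ᵥ w := ih
        _ = (Pπᵀ ^ n) *ᵥ (Pπᵀ *ᵥ w) := by rw [← hw]
        _ = (Pπᵀ ^ (n + 1)) *ᵥ w := by rw [Matrix.mulVec_mulVec, ← pow_succ]
    funext s
    have hconv : Tendsto (fun k => ((Pπᵀ ^ k) *ᵥ w) s) atTop (𝓝 0) := by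
      have he : ∀ k, ((Pπᵀ ^ k) *ᵥ w) s = ∑ t, (Pπ ^ k) t s * w t := by
        intro k
        rw [← Matrix.transpose_pow]
        simp [Matrix.mulVec, dotProduct, Matrix.transpose_apply]
      simp only [he]
      have : Tendsto (fun k => ∑ t, (Pπ ^ k) t s * w t) atTop (𝓝 (∑ t : S, 0)) := by
        refine tendsto_finset_sum _ fun t _ => ?_
        simpa using (hent t s).mul_const (w t)
      simpa using this
    have hconst : Tendsto (fun k => ((Pπᵀ ^ k) *ᵥ w) s) atTop (𝓝 (w s)) := by
      have he : (fun k => ((Pπᵀ ^ k) *ᵥ w) s) = fun _ => w s := by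
        funext k; rw [← hk k]
      rw [he]; exact tendsto_const_nhds
    have := tendsto_nhds_unique hconst hconv
    simpa using this
  -- main uniqueness argument: v = A v + d0 → v = dπ
  have huniq : ∀ v : S → ℝ, v = Pπᵀ *ᵥ v + d0 → v = dπ := by
    intro v hv
    have hw : v - dπ = Pπᵀ *ᵥ (v - dπ) := by
      rw [Matrix.mulVec_sub]
      calc v - dπ = (Pπᵀ *ᵥ v + d0) - (Pπᵀ *ᵥ dπ + d0) := by rw [← hv, ← hdπrec]
      _ = Pπᵀ *ᵥ v - Pπᵀ *ᵥ dπ := by abel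
    exact sub_eq_zero.mp (hzero (v - dπ) hw)
  constructor
  · -- fixed point
    funext s
    rw [hYpt]
    have hD : (fun t => dμ t * (dπ t / dμ t)) = dπ := by
      funext t
      rw [mul_comm, div_mul_cancel₀ _ (hdμne t)]
    rw [hD]
    have h2 : (Pπᵀ *ᵥ dπ) s = dπ s - d0 s := by
      have := congrFun hdπrec s
      simp only [Pi.add_apply] at this
      linarith
    rw [h2, mul_sub, hd0inv s, sub_add_cancel, div_eq_inv_mul]
  · -- uniqueness
    intro c hc
    have hv : (fun t => dμ t * c t) = Pπᵀ *ᵥ (fun t => dμ t * c t) + d0 := by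
      funext s
      have h1 : Y c s = c s := by rw [hc]
      rw [hYpt] at h1
      have h2 := congrArg (fun x => dμ s * x) h1
      rw [mul_add, ← mul_assoc, mul_inv_cancel₀ (hdμne s), one_mul] at h2
      have hds : dμ s * d0 s = d0 s := by
        rw [hd0]
        by_cases h : s = s0
        · simp [h, hdμs0]
        · simp [h]
      rw [hds] at h2
      simpa [Pi.add_apply] using h2.symm
    have hveq : (fun t => dμ t * c t) = dπ := huniq _ hv
    funext s
    have h3 : dμ s * c s = dπ s := congrFun hveq s
    rw [eq_div_iff (hdμne s), mul_comm]
    exact h3
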